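/- Let p, q be coprime integers with q ≥ 2, and let J : ℤ → ℤ[t,t⁻¹] satisfy J(−m) = −J(m) for all m and J(m) ≠ 0 for all m ≥ 1. Suppose there are rational numbers a₀, a₁, b₀, b₁, d₀, d₁ with b₀ ≤ 0 and b₁ ≤ 0, and an integer N, such that for all n ≥ N one has deg₊ J(n) = 4(a_ε n² + b_ε n + d_ε), where ε is the parity of n, and assume p/q ∉ {4a₀, 4a₁}. Then every limit point of the sequence ( deg₊ JC(n) / (4n²) )_{n ≥ 1} lies in {q²a₀, q²a₁, pq/4}; that is, the set of such limit points is contained in q²·L ∪ {pq/4}, where L = {a₀, a₁} is the set of limit points of ( deg₊ J(n) / (4n²) )_{n ≥ 1}. (The Jones-slope containment js_{K_{p,q}} ⊆ q²·js_K ∪ {pq/4} of Theorem 1.3, expressed at the level of degree sequences.) -/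

import Mathlib

open LaurentPolynomial Filter

/-- `degP f` is the largest exponent of `t` occurring in the Laurent polynomial `f`
(declared to be `0` for `f = 0`). -/
noncomputable def degP (f : LaurentPolynomial ℤ) : ℤ := WithBot.unbotD 0 f.coeff.support.max

noncomputable def cf (f : LaurentPolynomial ℤ) (k : ℤ) : ℤ := f.coeff k

lemma mem_support_cf {f : LaurentPolynomial ℤ} {k : ℤ} : k ∈ f.coeff.support ↔ cf f k ≠ 0 :=
  Finsupp.mem_support_iff

lemma cf_add (f g : LaurentPolynomial ℤ) (k : ℤ) : cf (f + g) k = cf f k + cf g k :=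
  by simp [cf, AddMonoidAlgebra.coeff_add]

lemma cf_zero (k : ℤ) : cf (0 : LaurentPolynomial ℤ) k = 0 := by simp [cf]

lemma degP_eq_max' {f : LaurentPolynomial ℤ} (hf : f ≠ 0) :
    degP f = f.coeff.support.max' (Finsupp.support_nonempty_iff.mpr (by simpa using hf)) := by
  rw [degP, ← Finset.coe_max' (Finsupp.support_nonempty_iff.mpr (by simpa using hf))]
  rfl

lemma degP_mem {f : LaurentPolynomial ℤ} (hf : f ≠ 0) : degP f ∈ f.coeff.support := by
  rw [degP_eq_max' hf]; exact Finset.max'_mem _ _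

lemma le_degP {f : LaurentPolynomial ℤ} {k : ℤ} (hf : f ≠ 0) (h : k ∈ f.coeff.support) :
    k ≤ degP f := by
  rw [degP_eq_max' hf]; exact Finset.le_max' _ _ h

lemma degP_neg (f : LaurentPolynomial ℤ) : degP (-f) = degP f := by
  unfold degP; rw [AddMonoidAlgebra.coeff_neg, Finsupp.support_neg]

lemma T_eq_single (e : ℤ) : (T e : LaurentPolynomial ℤ) = AddMonoidAlgebra.single e 1 := rfl

lemma cf_T_mul (e : ℤ) (f : LaurentPolynomial ℤ) (y : ℤ) :
    cf (T e * f) y = cf f (y - e) := by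
  have h := AddMonoidAlgebra.coeff_single_mul_apply f (1 : ℤ) e y
  rw [one_mul] at h
  rw [cf, cf, T_eq_single]
  rw [show -e + y = y - e from by ring] at h
  exact h

lemma support_T_mul (e : ℤ) (f : LaurentPolynomial ℤ) :
    (T e * f).coeff.support = f.coeff.support.map (addLeftEmbedding e) := by
  ext k
  simp only [Finsupp.mem_support_iff, Finset.mem_map, addLeftEmbedding_apply]
  constructor
  · intro h
    refine ⟨k - e, ?_, by ring⟩
    have h2 := cf_T_mul e f k
    simp only [cf] at h2
    rwa [h2] at h
  · rintro ⟨a, ha, rfl⟩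
    have := cf_T_mul e f (e + a)
    simp only [cf] at this ⊢
    rw [this]; simpa using ha

lemma T_mul_ne_zero {f : LaurentPolynomial ℤ} (hf : f ≠ 0) (e : ℤ) : T e * f ≠ 0 := by
  intro h
  apply hf
  rw [← AddMonoidAlgebra.coeff_eq_zero, ← Finsupp.support_eq_empty] at h ⊢
  rw [support_T_mul] at h
  simpa using h

lemma degP_T_mul {f : LaurentPolynomial ℤ} (hf : f ≠ 0) (e : ℤ) :
    degP (T e * f) = e + degP f := by
  have hne := T_mul_ne_zero hf e
  apply le_antisymm
  · have h := degP_mem hne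
    rw [support_T_mul] at h
    obtain ⟨a, ha, hae⟩ := Finset.mem_map.mp h
    rw [addLeftEmbedding_apply] at hae
    rw [← hae]
    exact add_le_add_right (le_degP hf ha) e
  · apply le_degP hne
    rw [support_T_mul, Finset.mem_map]
    exact ⟨degP f, degP_mem hf, addLeftEmbedding_apply e _⟩

/-- If `f` is zero or has degree less than that of `g ≠ 0`, the sum is nonzero with
degree `degP g`. -/
lemma degP_add_right {f g : LaurentPolynomial ℤ} (hg : g ≠ 0)
    (h : f = 0 ∨ degP f < degP g) : f + g ≠ 0 ∧ degP (f + g) = degP g := by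
  have hfd : cf f (degP g) = 0 := by
    rcases h with rfl | h
    · exact cf_zero _
    · by_contra hne
      have hf0 : f ≠ 0 := by rintro rfl; exact hne (cf_zero _)
      exact absurd (le_degP hf0 (mem_support_cf.mpr hne)) (not_le.mpr h)
  have hmem : degP g ∈ (f + g).coeff.support := by
    rw [mem_support_cf, cf_add, hfd, zero_add]
    exact mem_support_cf.mp (degP_mem hg)
  have hne : f + g ≠ 0 := by
    intro h0; rw [h0] at hmem; simp at hmem
  refine ⟨hne, le_antisymm ?_ (le_degP hne hmem)⟩
  have hmd := degP_mem hne
  rw [mem_support_cf, cf_add] at hmd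
  by_contra hlt
  push_neg at hlt
  have h1 : cf g (degP (f + g)) = 0 := by
    by_contra hne2
    exact absurd (le_degP hg (mem_support_cf.mpr hne2)) (not_le.mpr hlt)
  have h2 : cf f (degP (f + g)) = 0 := by
    rcases h with rfl | h
    · exact cf_zero _
    · by_contra hne2
      have hf0 : f ≠ 0 := by rintro rfl; exact hne2 (cf_zero _)
      exact absurd (le_degP hf0 (mem_support_cf.mpr hne2)) (not_le.mpr (h.trans hlt))
  rw [h1, h2] at hmd; simp at hmd

lemma degP_add_le {f g : LaurentPolynomial ℤ} (hf : f ≠ 0) (hg : g ≠ 0)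
    (hfg : f + g ≠ 0) : degP (f + g) ≤ max (degP f) (degP g) := by
  have h := degP_mem hfg
  rw [mem_support_cf, cf_add] at h
  rcases (by omega : cf f (degP (f+g)) ≠ 0 ∨ cf g (degP (f+g)) ≠ 0) with h1 | h1
  · exact le_max_of_le_left (le_degP hf (mem_support_cf.mpr h1))
  · exact le_max_of_le_right (le_degP hg (mem_support_cf.mpr h1))
/-- Increasing top-degree increments: eventually the degree of the partial sum is the
degree of the last increment. -/
lemma seq_inc (u δ : ℕ → LaurentPolynomial ℤ) (m : ℕ → ℤ)
    (hrec : ∀ k, u (k + 1) = u k + δ k)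
    (hδ : ∀ k, δ k ≠ 0) (hm : ∀ k, degP (δ k) = m k)
    (hmono : ∀ k, m k < m (k + 1)) :
    ∃ K, ∀ k, K ≤ k → u (k + 1) ≠ 0 ∧ degP (u (k + 1)) = m k := by
  have hbase : ∃ k, u k = 0 ∨ degP (u k) < m k := by
    by_contra hc
    push_neg at hc
    have hstep : ∀ k, degP (u (k + 1)) ≤ degP (u k) := by
      intro k
      have h1 := (hc k).1
      have h2 := (hc k).2
      have h3 := (hc (k + 1)).1
      have := degP_add_le h1 (hδ k) (hrec k ▸ h3)
      rw [← hrec k] at this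
      rw [hm k] at this
      omega
    have hle : ∀ k, degP (u k) ≤ degP (u 0) := by
      intro k; induction k with
      | zero => exact le_refl _
      | succ n ih => exact (hstep n).trans ih
    have hgrow : ∀ k : ℕ, m 0 + k ≤ m k := by
      intro k; induction k with
      | zero => simp
      | succ n ih => have := hmono n; push_cast; omega
    obtain ⟨k, hk⟩ : ∃ k : ℕ, degP (u 0) < m 0 + k :=
      ⟨(degP (u 0) - m 0 + 1).toNat, by omega⟩
    have := (hc k).2
    have := hle k
    have := hgrow k
    omega
  obtain ⟨k₀, hk₀⟩ := hbase
  have key : ∀ j : ℕ, (u (k₀ + j + 1) ≠ 0 ∧ degP (u (k₀ + j + 1)) = m (k₀ + j)) ∧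
      degP (u (k₀ + j + 1)) < m (k₀ + j + 1) := by
    intro j; induction j with
    | zero =>
      have hk₀' : u k₀ = 0 ∨ degP (u k₀) < degP (δ k₀) := by rw [hm k₀]; exact hk₀
      have h := degP_add_right (hδ k₀) hk₀'
      rw [← hrec k₀] at h
      exact ⟨⟨h.1, h.2.trans (hm k₀)⟩, by rw [h.2, hm k₀]; exact hmono k₀⟩
    | succ n ih =>
      have h := degP_add_right (f := u (k₀ + n + 1)) (g := δ (k₀ + n + 1)) (hδ (k₀ + n + 1))
        (Or.inr (by rw [hm]; exact ih.2))
      rw [← hrec (k₀ + n + 1)] at h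
      have e1 : k₀ + (n + 1) = k₀ + n + 1 := by omega
      rw [e1]
      exact ⟨⟨h.1, h.2.trans (hm _)⟩, by rw [h.2, hm]; exact hmono _⟩
  refine ⟨k₀, fun k hk => ?_⟩
  obtain ⟨j, rfl⟩ : ∃ j, k = k₀ + j := ⟨k - k₀, by omega⟩
  exact (key j).1

/-- Decreasing top-degree increments: either the degree of the partial sums freezes,
or it always equals the degree of the next increment. -/
lemma seq_dec (u δ : ℕ → LaurentPolynomial ℤ) (m : ℕ → ℤ)
    (hrec : ∀ k, u (k + 1) = u k + δ k)
    (hδ : ∀ k, δ k ≠ 0) (hm : ∀ k, degP (δ k) = m k)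
    (hanti : ∀ k, m (k + 1) < m k) :
    (∃ K c, ∀ k, K ≤ k → u k ≠ 0 ∧ degP (u k) = c) ∨
    (∀ k, u k ≠ 0 ∧ degP (u k) = m k) := by
  have hmle : ∀ k j, m (k + j) ≤ m k := by
    intro k j
    induction j with
    | zero => simp
    | succ n ih =>
      have h1 := hanti (k + n)
      have e : k + (n + 1) = (k + n) + 1 := by omega
      rw [e]; omega
  by_cases hex : ∃ k, u k ≠ 0 ∧ m k < degP (u k)
  · obtain ⟨k₀, hk₀, hdk₀⟩ := hex
    left
    refine ⟨k₀, degP (u k₀), fun k hk => ?_⟩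
    obtain ⟨j, rfl⟩ : ∃ j, k = k₀ + j := ⟨k - k₀, by omega⟩
    clear hk
    induction j with
    | zero => exact ⟨hk₀, rfl⟩
    | succ n ih =>
      have e1 : k₀ + (n + 1) = (k₀ + n) + 1 := by omega
      have h := degP_add_right (f := δ (k₀ + n)) (g := u (k₀ + n)) ih.1
        (Or.inr (by rw [hm, ih.2]; exact lt_of_le_of_lt (hmle k₀ n) hdk₀))
      rw [add_comm (δ (k₀ + n)) (u (k₀ + n)), ← hrec (k₀ + n)] at h
      rw [e1]
      exact ⟨h.1, h.2.trans ih.2⟩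
  · push_neg at hex
    right
    have hne : ∀ k, u k ≠ 0 := by
      intro k hk0
      have h1 : u (k + 1) = δ k := by rw [hrec k, hk0, zero_add]
      have h2 : degP (u (k + 1)) = m k := by rw [h1, hm]
      have h3 := hex (k + 1) (h1 ▸ hδ k)
      rw [h2] at h3
      exact absurd (hanti k) (by omega)
    intro k
    refine ⟨hne k, ?_⟩
    have hle : ∀ l, degP (u l) ≤ m l := fun l => hex l (hne l)
    have h := degP_add_right (f := u (k + 1)) (g := -δ k) (by simpa using hδ k)
      (Or.inr (by rw [degP_neg, hm]; exact lt_of_le_of_lt (hle (k + 1)) (hanti k)))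
    have e1 : u (k + 1) + -δ k = u k := by rw [hrec k]; ring
    rw [e1, degP_neg, hm] at h
    exact h.2

/-- The `(p,q)`-cabling sum `JC(n) = Σ_j t^{pq(n²−1) − p·j·(qj+2)} · J(qj+1)`,
the sum over integers `j` with `|j| ≤ n−1` and `j ≡ n−1 (mod 2)`. -/
noncomputable def cablingSum (J : ℤ → LaurentPolynomial ℤ) (p q : ℤ) (n : ℕ) :
    LaurentPolynomial ℤ :=
  ∑ j ∈ (Finset.Icc (1 - (n : ℤ)) ((n : ℤ) - 1)).filter
      (fun j => j % 2 = ((n : ℤ) - 1) % 2),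
    T (p * q * ((n : ℤ) ^ 2 - 1) - p * j * (q * j + 2)) * J (q * j + 1)

/-- The cabling sum with the overall `T`-prefactor removed. -/
noncomputable def Sc (J : ℤ → LaurentPolynomial ℤ) (p q : ℤ) (n : ℕ) :
    LaurentPolynomial ℤ :=
  ∑ j ∈ (Finset.Icc (1 - (n : ℤ)) ((n : ℤ) - 1)).filter
      (fun j => j % 2 = ((n : ℤ) - 1) % 2),
    T (-(p * j * (q * j + 2))) * J (q * j + 1)

/-- A single term of `Sc`. -/
noncomputable def termS (J : ℤ → LaurentPolynomial ℤ) (p q j : ℤ) :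
    LaurentPolynomial ℤ :=
  T (-(p * j * (q * j + 2))) * J (q * j + 1)

lemma cablingSum_eq (J : ℤ → LaurentPolynomial ℤ) (p q : ℤ) (n : ℕ) :
    cablingSum J p q n = T (p * q * ((n : ℤ) ^ 2 - 1)) * Sc J p q n := by
  unfold cablingSum Sc
  rw [Finset.mul_sum]
  refine Finset.sum_congr rfl fun j _ => ?_
  rw [show p * q * ((n : ℤ) ^ 2 - 1) - p * j * (q * j + 2)
      = p * q * ((n : ℤ) ^ 2 - 1) + -(p * j * (q * j + 2)) from by ring, T_add, mul_assoc]

lemma Sc_rec (J : ℤ → LaurentPolynomial ℤ) (p q : ℤ) (n : ℕ) :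
    Sc J p q (n + 2) = Sc J p q n + (termS J p q ((n : ℤ) + 1) + termS J p q (-((n : ℤ) + 1))) := by
  unfold Sc termS
  have hset : (Finset.Icc (1 - ((n : ℕ) + 2 : ℕ) : ℤ) (((n : ℕ) + 2 : ℕ) - 1)).filter
      (fun j => j % 2 = ((((n : ℕ) + 2 : ℕ) : ℤ) - 1) % 2) =
      insert ((n : ℤ) + 1) (insert (-((n : ℤ) + 1))
        ((Finset.Icc (1 - (n : ℤ)) ((n : ℤ) - 1)).filter
          (fun j => j % 2 = ((n : ℤ) - 1) % 2))) := by
    ext j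
    simp only [Finset.mem_filter, Finset.mem_Icc, Finset.mem_insert]
    push_cast
    omega
  rw [hset, Finset.sum_insert, Finset.sum_insert]
  · ring
  · intro hmem
    simp only [Finset.mem_insert, Finset.mem_filter, Finset.mem_Icc] at hmem
    omega
  · intro hmem
    simp only [Finset.mem_insert, Finset.mem_filter, Finset.mem_Icc] at hmem
    omega
open Filter Topology in
lemma tendsto_quad (c₂ c₁ c₀ : ℝ) :
    Tendsto (fun x : ℝ => (c₂ * x ^ 2 + c₁ * x + c₀) / (4 * x ^ 2)) atTop (𝓝 (c₂ / 4)) := by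
  have h1 : Tendsto (fun x : ℝ => x⁻¹) atTop (𝓝 0) := tendsto_inv_atTop_zero
  have h2 : Tendsto (fun x : ℝ => (x ^ 2)⁻¹) atTop (𝓝 0) :=
    tendsto_inv_atTop_zero.comp (tendsto_pow_atTop two_ne_zero)
  have hlim : Tendsto (fun x : ℝ => c₂ / 4 + (c₁ / 4) * x⁻¹ + (c₀ / 4) * (x ^ 2)⁻¹)
      atTop (𝓝 (c₂ / 4)) := by
    have := ((tendsto_const_nhds (x := c₂ / 4) (f := atTop)).add
      (h1.const_mul (c₁ / 4))).add (h2.const_mul (c₀ / 4))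
    simpa using this
  refine hlim.congr' ?_
  filter_upwards [eventually_gt_atTop (0 : ℝ)] with x hx
  have hx2 : x ^ 2 ≠ 0 := pow_ne_zero 2 (ne_of_gt hx)
  field_simp

open Filter Topology in
lemma tendsto_quad_seq (c₂ c₁ c₀ : ℝ) {w : ℕ → ℝ} (hw : Tendsto w atTop atTop) :
    Tendsto (fun k => (c₂ * (w k) ^ 2 + c₁ * (w k) + c₀) / (4 * (w k) ^ 2))
      atTop (𝓝 (c₂ / 4)) :=
  (tendsto_quad c₂ c₁ c₀).comp hw

lemma tendsto_shift_seq (n₀ : ℕ) :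
    Filter.Tendsto (fun k : ℕ => ((n₀ + 2 * k : ℕ) : ℝ)) Filter.atTop Filter.atTop :=
  tendsto_natCast_atTop_atTop.comp
    (Filter.tendsto_atTop_mono (fun k => (by simp only [id]; omega : id k ≤ n₀ + 2 * k))
      Filter.tendsto_id)

lemma max_affine (a b c d : ℝ) (hd : 0 < d) :
    (max a b + c) / d = max ((a + c) / d) ((b + c) / d) := by
  rcases le_total a b with h | h
  · rw [max_eq_right h, max_eq_right ((div_le_div_iff_of_pos_right hd).mpr (by linarith))]
  · rw [max_eq_left h, max_eq_left ((div_le_div_iff_of_pos_right hd).mpr (by linarith))]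

open Filter Topology in
/-- If the even and odd subsequences converge, every cluster point is one of the two limits. -/
lemma cluster_parity {s : ℕ → ℝ} {L₀ L₁ x : ℝ}
    (he : Tendsto (fun k => s (2 * k)) atTop (𝓝 L₀))
    (ho : Tendsto (fun k => s (2 * k + 1)) atTop (𝓝 L₁))
    (hx : MapClusterPt x atTop s) : x = L₀ ∨ x = L₁ := by
  by_contra hc
  push_neg at hc
  obtain ⟨h0, h1⟩ := hc
  set ε : ℝ := min (|x - L₀| / 2) (|x - L₁| / 2) with hε
  have hε0 : 0 < ε := by
    apply lt_min <;> · apply div_pos _ two_pos; rwa [abs_pos, sub_ne_zero]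
  have hball : Metric.ball x ε ∈ 𝓝 x := Metric.ball_mem_nhds x hε0
  have hfreq := (mapClusterPt_iff_frequently.mp hx) _ hball
  obtain ⟨K₀, hK₀'⟩ := Metric.tendsto_atTop.mp he ε hε0
  obtain ⟨K₁, hK₁'⟩ := Metric.tendsto_atTop.mp ho ε hε0
  have hK₀ : ∀ k, K₀ ≤ k → |s (2 * k) - L₀| < ε := fun k hk => by
    have := hK₀' k hk; rwa [Real.dist_eq] at this
  have hK₁ : ∀ k, K₁ ≤ k → |s (2 * k + 1) - L₁| < ε := fun k hk => by
    have := hK₁' k hk; rwa [Real.dist_eq] at this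
  have hev : ∀ᶠ n in atTop, s n ∉ Metric.ball x ε := by
    rw [eventually_atTop]
    refine ⟨2 * K₀ + 2 * K₁ + 2, fun n hn => ?_⟩
    rcases Nat.even_or_odd n with ⟨k, hk⟩ | ⟨k, hk⟩
    · have hk' : K₀ ≤ k := by omega
      have := hK₀ k hk'
      rw [show 2 * k = n from by omega] at this
      simp only [Metric.mem_ball, Real.dist_eq, not_lt]
      have h2 : 2 * ε ≤ |x - L₀| := by
        have := min_le_left (|x - L₀| / 2) (|x - L₁| / 2); rw [← hε] at this; linarith
      have := abs_sub_abs_le_abs_sub (x - L₀) (s n - L₀)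
      have h3 : |x - L₀ - (s n - L₀)| = |s n - x| := by rw [show x - L₀ - (s n - L₀) = -(s n - x) from by ring, abs_neg]
      linarith [abs_sub_abs_le_abs_sub (x - L₀) (s n - L₀), h3 ▸ abs_sub_abs_le_abs_sub (x - L₀) (s n - L₀)]
    · have hk' : K₁ ≤ k := by omega
      have := hK₁ k hk'
      rw [show 2 * k + 1 = n from by omega] at this
      simp only [Metric.mem_ball, Real.dist_eq, not_lt]
      have h2 : 2 * ε ≤ |x - L₁| := by
        have := min_le_right (|x - L₀| / 2) (|x - L₁| / 2); rw [← hε] at this; linarith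
      have h3 : |x - L₁ - (s n - L₁)| = |s n - x| := by rw [show x - L₁ - (s n - L₁) = -(s n - x) from by ring, abs_neg]
      linarith [h3 ▸ abs_sub_abs_le_abs_sub (x - L₁) (s n - L₁)]
  exact (hev.and_frequently hfreq).exists.elim (fun n hn => hn.1 hn.2)
/-- Expected degree of `termS J p q j` (positive index). -/
def EpQ (p q : ℤ) (a b d : ℚ) (x : ℚ) : ℚ :=
  -((p : ℚ) * x * ((q : ℚ) * x + 2)) +
    4 * (a * ((q : ℚ) * x + 1) ^ 2 + b * ((q : ℚ) * x + 1) + d)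

/-- Expected degree of `termS J p q (-j)` (negative index). -/
def EmQ (p q : ℤ) (a b d : ℚ) (x : ℚ) : ℚ :=
  -((p : ℚ) * (-x) * ((q : ℚ) * (-x) + 2)) +
    4 * (a * ((q : ℚ) * x - 1) ^ 2 + b * ((q : ℚ) * x - 1) + d)

open Filter Topology in
lemma tendsto_poly_ratio (n₀ : ℕ) (F : ℚ → ℚ) (c₂ c₁ c₀ : ℚ)
    (hF : ∀ x, F x = c₂ * x ^ 2 + c₁ * x + c₀) :
    Tendsto (fun k : ℕ => ((F ((n₀ + 2 * k : ℕ) : ℚ) : ℚ) : ℝ) / (4 * ((n₀ + 2 * k : ℕ) : ℝ) ^ 2))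
      atTop (𝓝 ((c₂ : ℝ) / 4)) := by
  have h := tendsto_quad_seq (c₂ : ℝ) (c₁ : ℝ) (c₀ : ℝ) (tendsto_shift_seq n₀)
  refine h.congr fun k => ?_
  rw [hF]
  push_cast
  ring

open Filter Topology in
/-- The per-parity-class limit: along `n = n₀ + 2k` the normalized degree of the cabling
sum converges either to `q²a` or to `pq/4`. -/
lemma classLimit (p q : ℤ) (J : ℤ → LaurentPolynomial ℤ) (a b d : ℚ) (n₀ : ℕ)
    (hterm : ∀ k : ℕ,
      termS J p q ((n₀ : ℤ) + 2 * k + 1) ≠ 0 ∧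
      termS J p q (-((n₀ : ℤ) + 2 * k + 1)) ≠ 0 ∧
      (degP (termS J p q ((n₀ : ℤ) + 2 * k + 1)) : ℚ) = EpQ p q a b d ((n₀ : ℚ) + 2 * k + 1) ∧
      (degP (termS J p q (-((n₀ : ℤ) + 2 * k + 1))) : ℚ) = EmQ p q a b d ((n₀ : ℚ) + 2 * k + 1))
    (hne : ∀ k : ℕ,
      EpQ p q a b d ((n₀ : ℚ) + 2 * k + 1) ≠ EmQ p q a b d ((n₀ : ℚ) + 2 * k + 1))
    (hmono :
      (∀ k : ℕ, max (EpQ p q a b d ((n₀ : ℚ) + 2 * k + 1)) (EmQ p q a b d ((n₀ : ℚ) + 2 * k + 1))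
        < max (EpQ p q a b d ((n₀ : ℚ) + 2 * (k + 1) + 1))
            (EmQ p q a b d ((n₀ : ℚ) + 2 * (k + 1) + 1))) ∨
      (∀ k : ℕ, max (EpQ p q a b d ((n₀ : ℚ) + 2 * (k + 1) + 1))
            (EmQ p q a b d ((n₀ : ℚ) + 2 * (k + 1) + 1))
        < max (EpQ p q a b d ((n₀ : ℚ) + 2 * k + 1))
            (EmQ p q a b d ((n₀ : ℚ) + 2 * k + 1)))) :
    ∃ L : ℝ, (L = (q : ℝ) ^ 2 * (a : ℝ) ∨ L = (p : ℝ) * (q : ℝ) / 4) ∧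
      Tendsto (fun k : ℕ =>
          (degP (cablingSum J p q (n₀ + 2 * k)) : ℝ) / (4 * ((n₀ + 2 * k : ℕ) : ℝ) ^ 2))
        atTop (𝓝 L) := by
  set u : ℕ → LaurentPolynomial ℤ := fun k => Sc J p q (n₀ + 2 * k) with hu
  set δ : ℕ → LaurentPolynomial ℤ := fun k =>
    termS J p q ((n₀ : ℤ) + 2 * k + 1) + termS J p q (-((n₀ : ℤ) + 2 * k + 1)) with hδdef
  set m : ℕ → ℤ := fun k =>
    max (degP (termS J p q ((n₀ : ℤ) + 2 * k + 1)))
      (degP (termS J p q (-((n₀ : ℤ) + 2 * k + 1)))) with hmdef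
  have hrec : ∀ k, u (k + 1) = u k + δ k := by
    intro k
    have h := Sc_rec J p q (n₀ + 2 * k)
    have e1 : n₀ + 2 * (k + 1) = n₀ + 2 * k + 2 := by omega
    have e2 : ((n₀ + 2 * k : ℕ) : ℤ) + 1 = (n₀ : ℤ) + 2 * k + 1 := by push_cast; ring
    rw [e2] at h
    simp only [hu, hδdef, e1]
    exact h
  have hmQ : ∀ k, (m k : ℚ) =
      max (EpQ p q a b d ((n₀ : ℚ) + 2 * k + 1)) (EmQ p q a b d ((n₀ : ℚ) + 2 * k + 1)) := by
    intro k
    obtain ⟨h1, h2, h3, h4⟩ := hterm k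
    rw [hmdef]
    push_cast [Int.cast_max]
    rw [h3, h4]
  have hδ : ∀ k, δ k ≠ 0 ∧ degP (δ k) = m k := by
    intro k
    obtain ⟨h1, h2, h3, h4⟩ := hterm k
    rcases (hne k).lt_or_gt with h | h
    · -- Ep < Em : the (-j) term dominates
      have hlt : degP (termS J p q ((n₀ : ℤ) + 2 * k + 1)) <
          degP (termS J p q (-((n₀ : ℤ) + 2 * k + 1))) := by
        rw [← @Int.cast_lt ℚ]; rw [h3, h4]; exact h
      have hh := degP_add_right h2 (Or.inr hlt)
      refine ⟨hh.1, hh.2.trans ?_⟩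
      rw [hmdef]
      exact (max_eq_right hlt.le).symm
    · -- Em < Ep : the (+j) term dominates
      have hlt : degP (termS J p q (-((n₀ : ℤ) + 2 * k + 1))) <
          degP (termS J p q ((n₀ : ℤ) + 2 * k + 1)) := by
        rw [← @Int.cast_lt ℚ]; rw [h3, h4]; exact h
      have hh := degP_add_right h1 (Or.inr hlt)
      have e : termS J p q (-((n₀ : ℤ) + 2 * k + 1)) + termS J p q ((n₀ : ℤ) + 2 * k + 1) = δ k := by
        rw [hδdef]; ring
      rw [e] at hh
      refine ⟨hh.1, hh.2.trans ?_⟩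
      rw [hmdef]
      exact (max_eq_left hlt.le).symm
  -- degree of the full cabling sum once `Sc ≠ 0`
  have hcab : ∀ k, u k ≠ 0 →
      degP (cablingSum J p q (n₀ + 2 * k)) =
        p * q * (((n₀ + 2 * k : ℕ) : ℤ) ^ 2 - 1) + degP (u k) := by
    intro k hk
    rw [cablingSum_eq]
    exact degP_T_mul hk _
  rcases hmono with hinc | hdec
  · -- increasing case : limit q² a
    have hmono' : ∀ k, m k < m (k + 1) := by
      intro k
      rw [← @Int.cast_lt ℚ, hmQ, hmQ]
      have := hinc k
      push_cast at this ⊢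
      convert this using 4 <;> push_cast <;> ring
    obtain ⟨K, hK⟩ := seq_inc u δ m hrec (fun k => (hδ k).1) (fun k => (hδ k).2) hmono'
    refine ⟨(q : ℝ) ^ 2 * (a : ℝ), Or.inl rfl, ?_⟩
    -- the two candidate limits
    set Fp : ℚ → ℚ := fun x => (p : ℚ) * q * (x ^ 2 - 1) + EpQ p q a b d (x - 1) with hFp
    set Fm : ℚ → ℚ := fun x => (p : ℚ) * q * (x ^ 2 - 1) + EmQ p q a b d (x - 1) with hFm
    have hFp' : ∀ x, Fp x = (4 * a * q ^ 2) * x ^ 2 + (Fp 1 - Fp 0 - 4 * a * q ^ 2) * x + Fp 0 := by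
      intro x; simp only [hFp, EpQ]; ring
    have hFm' : ∀ x, Fm x = (4 * a * q ^ 2) * x ^ 2 + (Fm 1 - Fm 0 - 4 * a * q ^ 2) * x + Fm 0 := by
      intro x; simp only [hFm, EmQ]; ring
    have hLp := tendsto_poly_ratio n₀ Fp _ _ _ hFp'
    have hLm := tendsto_poly_ratio n₀ Fm _ _ _ hFm'
    have hLmax := hLp.max hLm
    rw [max_self] at hLmax
    have hLval : (((4 * a * q ^ 2 : ℚ)) : ℝ) / 4 = (q : ℝ) ^ 2 * (a : ℝ) := by
      push_cast; ring
    rw [hLval] at hLmax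
    refine hLmax.congr' ?_
    rw [EventuallyEq, eventually_atTop]
    refine ⟨K + 1, fun k hk => ?_⟩
    obtain ⟨k', rfl⟩ : ∃ k', k = k' + 1 := ⟨k - 1, by omega⟩
    have hKk' : K ≤ k' := by omega
    obtain ⟨hne0, hdeg0⟩ := hK k' hKk'
    have hdc := hcab (k' + 1) hne0
    rw [hdeg0] at hdc
    -- cast everything to ℝ
    have hx : ((n₀ + 2 * (k' + 1) : ℕ) : ℚ) - 1 = (n₀ : ℚ) + 2 * k' + 1 := by push_cast; ring
    have hval : (degP (cablingSum J p q (n₀ + 2 * (k' + 1))) : ℚ) =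
        max (Fp ((n₀ + 2 * (k' + 1) : ℕ) : ℚ)) (Fm ((n₀ + 2 * (k' + 1) : ℕ) : ℚ)) := by
      rw [hdc]
      push_cast [hmQ k']
      rw [hFp, hFm]
      simp only
      rw [show ((n₀ : ℚ) + 2 * ((k' : ℚ) + 1) - 1) = (n₀ : ℚ) + 2 * (k' : ℚ) + 1 from by ring]
      rw [max_add_add_left]
    have hpos : (0 : ℝ) < 4 * ((n₀ + 2 * (k' + 1) : ℕ) : ℝ) ^ 2 := by
      have : (0 : ℝ) < ((n₀ + 2 * (k' + 1) : ℕ) : ℝ) := by positivity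
      positivity
    -- turn `max` of ℚ into max of the two real sequences
    have : (degP (cablingSum J p q (n₀ + 2 * (k' + 1))) : ℝ) =
        ((max (Fp ((n₀ + 2 * (k' + 1) : ℕ) : ℚ)) (Fm ((n₀ + 2 * (k' + 1) : ℕ) : ℚ)) : ℚ) : ℝ) := by
      rw [← hval]; push_cast; ring
    rw [this, Rat.cast_max, max_div_div_right hpos.le]
  · -- decreasing case
    have hmono' : ∀ k, m (k + 1) < m k := by
      intro k
      rw [← @Int.cast_lt ℚ, hmQ, hmQ]
      have := hdec k
      push_cast at this ⊢
      convert this using 4 <;> push_cast <;> ring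
    rcases seq_dec u δ m hrec (fun k => (hδ k).1) (fun k => (hδ k).2) hmono' with
      ⟨K, c, hK⟩ | hall
    · -- frozen degree : limit pq/4
      refine ⟨(p : ℝ) * (q : ℝ) / 4, Or.inr rfl, ?_⟩
      set F : ℚ → ℚ := fun x => (p : ℚ) * q * (x ^ 2 - 1) + c with hF
      have hF' : ∀ x, F x = ((p : ℚ) * q) * x ^ 2 + 0 * x + (c - p * q) := by
        intro x; simp only [hF]; ring
      have hL := tendsto_poly_ratio n₀ F _ _ _ hF'
      have hLval : (((p * q : ℚ)) : ℝ) / 4 = (p : ℝ) * (q : ℝ) / 4 := by push_cast; ring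
      rw [hLval] at hL
      refine hL.congr' ?_
      rw [EventuallyEq, eventually_atTop]
      refine ⟨K, fun k hk => ?_⟩
      obtain ⟨hne0, hdeg0⟩ := hK k hk
      have hdc := hcab k hne0
      rw [hdeg0] at hdc
      have : (degP (cablingSum J p q (n₀ + 2 * k)) : ℝ) =
          ((F ((n₀ + 2 * k : ℕ) : ℚ) : ℚ) : ℝ) := by
        rw [hF]
        simp only
        rw [hdc]
        push_cast
        ring
      rw [this]
    · -- degree follows the increments : limit q² a
      refine ⟨(q : ℝ) ^ 2 * (a : ℝ), Or.inl rfl, ?_⟩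
      set Fp : ℚ → ℚ := fun x => (p : ℚ) * q * (x ^ 2 - 1) + EpQ p q a b d (x + 1) with hFp
      set Fm : ℚ → ℚ := fun x => (p : ℚ) * q * (x ^ 2 - 1) + EmQ p q a b d (x + 1) with hFm
      have hFp' : ∀ x, Fp x = (4 * a * q ^ 2) * x ^ 2 + (Fp 1 - Fp 0 - 4 * a * q ^ 2) * x + Fp 0 := by
        intro x; simp only [hFp, EpQ]; ring
      have hFm' : ∀ x, Fm x = (4 * a * q ^ 2) * x ^ 2 + (Fm 1 - Fm 0 - 4 * a * q ^ 2) * x + Fm 0 := by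
        intro x; simp only [hFm, EmQ]; ring
      have hLp := tendsto_poly_ratio n₀ Fp _ _ _ hFp'
      have hLm := tendsto_poly_ratio n₀ Fm _ _ _ hFm'
      have hLmax := hLp.max hLm
      rw [max_self] at hLmax
      have hLval : (((4 * a * q ^ 2 : ℚ)) : ℝ) / 4 = (q : ℝ) ^ 2 * (a : ℝ) := by
        push_cast; ring
      rw [hLval] at hLmax
      refine hLmax.congr' ?_
      rw [EventuallyEq, eventually_atTop]
      refine ⟨1, fun k hk => ?_⟩
      obtain ⟨hne0, hdeg0⟩ := hall k
      have hdc := hcab k hne0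
      rw [hdeg0] at hdc
      have hx : ((n₀ + 2 * k : ℕ) : ℚ) + 1 = (n₀ : ℚ) + 2 * k + 1 := by push_cast; ring
      have hval : (degP (cablingSum J p q (n₀ + 2 * k)) : ℚ) =
          max (Fp ((n₀ + 2 * k : ℕ) : ℚ)) (Fm ((n₀ + 2 * k : ℕ) : ℚ)) := by
        rw [hdc]
        push_cast [hmQ k]
        rw [hFp, hFm]
        simp only
        rw [max_add_add_left]
      have hpos : (0 : ℝ) < 4 * ((n₀ + 2 * k : ℕ) : ℝ) ^ 2 := by
        have : (0 : ℝ) < ((n₀ + 2 * k : ℕ) : ℝ) := by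
          have : 1 ≤ n₀ + 2 * k := by omega
          exact_mod_cast Nat.cast_pos.mpr this
        positivity
      have : (degP (cablingSum J p q (n₀ + 2 * k)) : ℝ) =
          ((max (Fp ((n₀ + 2 * k : ℕ) : ℚ)) (Fm ((n₀ + 2 * k : ℕ) : ℚ)) : ℚ) : ℝ) := by
        rw [← hval]; push_cast; ring
      rw [this, Rat.cast_max, max_div_div_right hpos.le]
set_option maxHeartbeats 1000000 in
open Filter Topology in
lemma classFull (p q : ℤ) (hq : 2 ≤ q) (J : ℤ → LaurentPolynomial ℤ)
    (hJodd : ∀ m : ℤ, J (-m) = -J m) (hJne : ∀ m : ℤ, 1 ≤ m → J m ≠ 0)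
    (a b d : ℚ) (N : ℤ) (epar : Prop)
    (hdeg2 : ∀ m : ℤ, N ≤ m → (Even m ↔ epar) →
      (degP (J m) : ℚ) = 4 * (a * (m : ℚ) ^ 2 + b * (m : ℚ) + d))
    (h4aq : 4 * a * (q : ℚ) ≠ (p : ℚ))
    (r : ℕ)
    (hpar : ∀ j : ℤ, (∃ i : ℤ, j = 2 * i + r + 1) → (Even (q * j + 1) ↔ epar)) :
    ∃ (n₀ : ℕ) (L : ℝ), n₀ % 2 = r % 2 ∧
      (L = (q : ℝ) ^ 2 * (a : ℝ) ∨ L = (p : ℝ) * (q : ℝ) / 4) ∧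
      Filter.Tendsto (fun k : ℕ =>
          (degP (cablingSum J p q (n₀ + 2 * k)) : ℝ) / (4 * ((n₀ + 2 * k : ℕ) : ℝ) ^ 2))
        Filter.atTop (𝓝 L) := by
  have hq2 : (2 : ℚ) ≤ (q : ℚ) := by exact_mod_cast hq
  have hq0 : (0 : ℚ) < (q : ℚ) := by linarith
  set A : ℚ := 4 * a * (q : ℚ) ^ 2 - (p : ℚ) * (q : ℚ) with hAdef
  have hA : A ≠ 0 := by
    intro h
    apply h4aq
    have h' : (4 * a * (q : ℚ)) * (q : ℚ) = (p : ℚ) * (q : ℚ) := by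
      rw [hAdef] at h; ring_nf at h ⊢; linarith
    exact mul_right_cancel₀ (ne_of_gt hq0) h'
  have hAabs : (0 : ℚ) < |A| := abs_pos.mpr hA
  set D : ℚ := 16 * a * (q : ℚ) - 4 * (p : ℚ) with hDdef
  have hD : D ≠ 0 := by
    intro h; apply h4aq; rw [hDdef] at h; linarith
  have hDabs : (0 : ℚ) < |D| := abs_pos.mpr hD
  set Gp : ℚ := EpQ p q a b d 2 - EpQ p q a b d 0 with hGp
  set Gm : ℚ := EmQ p q a b d 2 - EmQ p q a b d 0 with hGm
  set R : ℚ := max (max ((N : ℚ)) 1)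
    (max (8 * |b| / |D|) (max (|Gp| / (4 * |A|)) (|Gm| / (4 * |A|)))) with hR
  obtain ⟨M, hM⟩ := exists_nat_gt R
  refine ⟨2 * M + r, ?_⟩
  set n₀ : ℕ := 2 * M + r with hn₀
  -- the index `j = n₀ + 2k + 1` is large
  have hjR : ∀ k : ℕ, R < ((n₀ : ℚ) + 2 * k + 1) := by
    intro k
    have h1 : (M : ℚ) ≤ ((n₀ : ℚ) + 2 * k + 1) := by
      have : (M : ℕ) ≤ n₀ + 2 * k + 1 := by omega
      calc (M : ℚ) ≤ ((n₀ + 2 * k + 1 : ℕ) : ℚ) := by exact_mod_cast this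
        _ = (n₀ : ℚ) + 2 * k + 1 := by push_cast; ring
    linarith
  have hRN : (N : ℚ) ≤ R := le_trans (le_max_left _ _) (le_max_left _ _)
  have hR1 : (1 : ℚ) ≤ R := le_trans (le_max_right _ _) (le_max_left _ _)
  have hRb : 8 * |b| / |D| ≤ R := le_trans (le_max_left _ _) (le_max_right _ _)
  have hRp : |Gp| / (4 * |A|) ≤ R :=
    le_trans (le_trans (le_max_left _ _) (le_max_right _ _)) (le_max_right _ _)
  have hRm : |Gm| / (4 * |A|) ≤ R :=
    le_trans (le_trans (le_max_right _ _) (le_max_right _ _)) (le_max_right _ _)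
  -- basic integer facts about j
  have hjfacts : ∀ k : ℕ, 1 ≤ (n₀ : ℤ) + 2 * k + 1 ∧ N ≤ (n₀ : ℤ) + 2 * k + 1 := by
    intro k
    have h1 := hjR k
    constructor
    · omega
    · have : (N : ℚ) < ((n₀ : ℚ) + 2 * k + 1) := lt_of_le_of_lt hRN h1
      have : (N : ℚ) < (((n₀ : ℤ) + 2 * k + 1 : ℤ) : ℚ) := by push_cast; push_cast at this; linarith
      exact le_of_lt (by exact_mod_cast this)
  have hqj : ∀ k : ℕ, let j := (n₀ : ℤ) + 2 * k + 1
      (1 ≤ q * j - 1 ∧ N ≤ q * j - 1 ∧ 1 ≤ q * j + 1 ∧ N ≤ q * j + 1) := by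
    intro k
    obtain ⟨h1, h2⟩ := hjfacts k
    set j := (n₀ : ℤ) + 2 * k + 1
    have hmul : 2 * j ≤ q * j := mul_le_mul_of_nonneg_right hq (by omega)
    refine ⟨by omega, by omega, by omega, by omega⟩
  -- parity facts
  have hparj : ∀ k : ℕ, (Even (q * ((n₀ : ℤ) + 2 * k + 1) + 1) ↔ epar) := by
    intro k
    apply hpar
    exact ⟨M + k, by push_cast [hn₀]; ring⟩
  have hparj' : ∀ k : ℕ, (Even (q * ((n₀ : ℤ) + 2 * k + 1) - 1) ↔ epar) := by
    intro k
    rw [← hparj k]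
    constructor <;> intro ⟨i, hi⟩
    · exact ⟨i + 1, by omega⟩
    · exact ⟨i - 1, by omega⟩
  -- the degree facts about the two extreme terms
  have hterm : ∀ k : ℕ,
      termS J p q ((n₀ : ℤ) + 2 * k + 1) ≠ 0 ∧
      termS J p q (-((n₀ : ℤ) + 2 * k + 1)) ≠ 0 ∧
      (degP (termS J p q ((n₀ : ℤ) + 2 * k + 1)) : ℚ) = EpQ p q a b d ((n₀ : ℚ) + 2 * k + 1) ∧
      (degP (termS J p q (-((n₀ : ℤ) + 2 * k + 1))) : ℚ) = EmQ p q a b d ((n₀ : ℚ) + 2 * k + 1) := by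
    intro k
    obtain ⟨hm1, hmN, hp1, hpN⟩ := hqj k
    set j := (n₀ : ℤ) + 2 * k + 1 with hjdef
    have hJp : J (q * j + 1) ≠ 0 := hJne _ hp1
    have hJm : J (q * j - 1) ≠ 0 := hJne _ hm1
    have htm : termS J p q (-j) = -(T (-(p * -j * (q * -j + 2))) * J (q * j - 1)) := by
      unfold termS
      rw [show q * -j + 1 = -(q * j - 1) from by ring, hJodd (q * j - 1), mul_neg]
    have hne1 : termS J p q j ≠ 0 := T_mul_ne_zero hJp _
    have hne2 : termS J p q (-j) ≠ 0 := by
      rw [htm]; exact neg_ne_zero.mpr (T_mul_ne_zero hJm _)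
    refine ⟨hne1, hne2, ?_, ?_⟩
    · unfold termS
      rw [degP_T_mul hJp]
      push_cast
      rw [hdeg2 (q * j + 1) hpN (hparj k)]
      unfold EpQ
      push_cast [hjdef]
      ring
    · rw [htm, degP_neg, degP_T_mul hJm]
      push_cast
      rw [hdeg2 (q * j - 1) hmN (hparj' k)]
      unfold EmQ
      push_cast [hjdef]
      ring
  -- difference of the two degree formulas
  have hdiff : ∀ x : ℚ, EpQ p q a b d x - EmQ p q a b d x = D * x + 8 * b := by
    intro x; unfold EpQ EmQ; rw [hDdef]; ring
  have hne : ∀ k : ℕ,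
      EpQ p q a b d ((n₀ : ℚ) + 2 * k + 1) ≠ EmQ p q a b d ((n₀ : ℚ) + 2 * k + 1) := by
    intro k h
    set x : ℚ := (n₀ : ℚ) + 2 * k + 1 with hx
    have h0 : D * x + 8 * b = 0 := by rw [← hdiff x, h]; ring
    have hxR : 8 * |b| < x * |D| := (div_lt_iff₀ hDabs).mp (lt_of_le_of_lt hRb (hjR k))
    have hxpos : (0 : ℚ) < x := lt_of_lt_of_le zero_lt_one (le_of_lt (lt_of_le_of_lt hR1 (hjR k)))
    have h2 : |D * x| = |D| * x := by rw [abs_mul, abs_of_pos hxpos]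
    have h3 : D * x = -(8 * b) := by linarith
    have h4 : |D * x| = |8 * b| := by rw [h3, abs_neg]
    have h5 : |8 * b| = 8 * |b| := by rw [abs_mul]; norm_num
    linarith [hxR, h2, h4, h5]
  -- step identities for the quadratics
  have hstep_p : ∀ x : ℚ, EpQ p q a b d (x + 2) - EpQ p q a b d x = 4 * A * x + Gp := by
    intro x; rw [hGp, hAdef]; unfold EpQ; ring
  have hstep_m : ∀ x : ℚ, EmQ p q a b d (x + 2) - EmQ p q a b d x = 4 * A * x + Gm := by
    intro x; rw [hGm, hAdef]; unfold EmQ; ring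
  have hXGp : ∀ k : ℕ, |Gp| < ((n₀ : ℚ) + 2 * k + 1) * (4 * |A|) :=
    fun k => (div_lt_iff₀ (by positivity)).mp (lt_of_le_of_lt hRp (hjR k))
  have hXGm : ∀ k : ℕ, |Gm| < ((n₀ : ℚ) + 2 * k + 1) * (4 * |A|) :=
    fun k => (div_lt_iff₀ (by positivity)).mp (lt_of_le_of_lt hRm (hjR k))
  have hX2 : ∀ k : ℕ, ((n₀ : ℚ) + 2 * ((k : ℚ) + 1) + 1) = ((n₀ : ℚ) + 2 * (k : ℚ) + 1) + 2 := by
    intro k; ring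
  have hmono :
      (∀ k : ℕ, max (EpQ p q a b d ((n₀ : ℚ) + 2 * k + 1)) (EmQ p q a b d ((n₀ : ℚ) + 2 * k + 1))
        < max (EpQ p q a b d ((n₀ : ℚ) + 2 * ((k : ℚ) + 1) + 1))
            (EmQ p q a b d ((n₀ : ℚ) + 2 * ((k : ℚ) + 1) + 1))) ∨
      (∀ k : ℕ, max (EpQ p q a b d ((n₀ : ℚ) + 2 * ((k : ℚ) + 1) + 1))
            (EmQ p q a b d ((n₀ : ℚ) + 2 * ((k : ℚ) + 1) + 1))
        < max (EpQ p q a b d ((n₀ : ℚ) + 2 * k + 1))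
            (EmQ p q a b d ((n₀ : ℚ) + 2 * k + 1))) := by
    rcases hA.lt_or_gt with hAneg | hApos
    · right
      intro k
      rw [hX2 k]
      have eA : |A| = -A := abs_of_neg hAneg
      have e2 := neg_abs_le Gp
      have e2' := le_abs_self Gp
      have e3 := hstep_p ((n₀ : ℚ) + 2 * k + 1)
      have e4 := hXGp k
      rw [eA] at e4
      have e5 := neg_abs_le Gm
      have e5' := le_abs_self Gm
      have e6 := hstep_m ((n₀ : ℚ) + 2 * k + 1)
      have e7 := hXGm k
      rw [eA] at e7
      exact max_lt_max (by linarith) (by linarith)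
    · left
      intro k
      rw [hX2 k]
      have eA : |A| = A := abs_of_pos hApos
      have e2 := neg_abs_le Gp
      have e3 := hstep_p ((n₀ : ℚ) + 2 * k + 1)
      have e4 := hXGp k
      rw [eA] at e4
      have e5 := neg_abs_le Gm
      have e6 := hstep_m ((n₀ : ℚ) + 2 * k + 1)
      have e7 := hXGm k
      rw [eA] at e7
      exact max_lt_max (by linarith) (by linarith)
  obtain ⟨L, hL, htend⟩ := classLimit p q J a b d n₀ hterm hne hmono
  exact ⟨L, by omega, hL, htend⟩
open Filter Topology

/-- The Jones-slope containment `js_{K_{p,q}} ⊆ q²·js_K ∪ {pq/4}` of Theorem 1.3 of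
Kalfagianni–Tran, expressed at the level of degree sequences: every cluster point of
`deg₊ JC(n) / (4n²)` lies in `{q²a₀, q²a₁, pq/4}`. -/
theorem statement7 (p q : ℤ) (hq : 2 ≤ q) (hcop : Int.gcd p q = 1)
    (J : ℤ → LaurentPolynomial ℤ)
    (hJodd : ∀ m : ℤ, J (-m) = -J m)
    (hJne : ∀ m : ℤ, 1 ≤ m → J m ≠ 0)
    (a₀ a₁ b₀ b₁ d₀ d₁ : ℚ) (hb₀ : b₀ ≤ 0) (hb₁ : b₁ ≤ 0) (N : ℤ)
    (hdeg : ∀ n : ℤ, N ≤ n →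
      (degP (J n) : ℚ) =
        4 * ((if Even n then a₀ else a₁) * (n : ℚ) ^ 2 +
             (if Even n then b₀ else b₁) * (n : ℚ) +
             (if Even n then d₀ else d₁)))
    (hslope₀ : (p : ℚ) / (q : ℚ) ≠ 4 * a₀)
    (hslope₁ : (p : ℚ) / (q : ℚ) ≠ 4 * a₁) :
    ∀ x : ℝ,
      MapClusterPt x Filter.atTop
        (fun n : ℕ => (degP (cablingSum J p q n) : ℝ) / (4 * (n : ℝ) ^ 2)) →
      x ∈ ({(q : ℝ) ^ 2 * (a₀ : ℝ), (q : ℝ) ^ 2 * (a₁ : ℝ),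
            (p : ℝ) * (q : ℝ) / 4} : Set ℝ) := by
  intro x hx
  have hq2 : (2 : ℚ) ≤ (q : ℚ) := by exact_mod_cast hq
  have hq0 : (q : ℚ) ≠ 0 := by intro h; rw [h] at hq2; norm_num at hq2
  have h4aq₀ : 4 * a₀ * (q : ℚ) ≠ (p : ℚ) := by
    intro h; apply hslope₀; rw [← h]; field_simp
  have h4aq₁ : 4 * a₁ * (q : ℚ) ≠ (p : ℚ) := by
    intro h; apply hslope₁; rw [← h]; field_simp
  set s : ℕ → ℝ :=
    fun n : ℕ => (degP (cablingSum J p q n) : ℝ) / (4 * (n : ℝ) ^ 2) with hs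
  set Tset : Set ℝ := {(q : ℝ) ^ 2 * (a₀ : ℝ), (q : ℝ) ^ 2 * (a₁ : ℝ),
      (p : ℝ) * (q : ℝ) / 4} with hTset
  have classAny : ∀ r : ℕ, ∃ (n₀ : ℕ) (L : ℝ), n₀ % 2 = r % 2 ∧ L ∈ Tset ∧
      Tendsto (fun k : ℕ => s (n₀ + 2 * k)) atTop (𝓝 L) := by
    intro r
    have hparity : ∀ j : ℤ, (∃ i : ℤ, j = 2 * i + r + 1) →
        (Even (q * j + 1) ↔ Even (q * ((r : ℤ) + 1) + 1)) := by
      rintro j ⟨i, rfl⟩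
      have he : Even ((q * (2 * i + r + 1) + 1) - (q * ((r : ℤ) + 1) + 1)) :=
        ⟨q * i, by ring⟩
      exact Int.even_sub.mp he
    by_cases hEv : Even (q * ((r : ℤ) + 1) + 1)
    · have hdeg2 : ∀ m : ℤ, N ≤ m → (Even m ↔ Even (q * ((r : ℤ) + 1) + 1)) →
          (degP (J m) : ℚ) = 4 * (a₀ * (m : ℚ) ^ 2 + b₀ * (m : ℚ) + d₀) := by
        intro m hm hpm
        have hEm : Even m := hpm.mpr hEv
        rw [hdeg m hm, if_pos hEm, if_pos hEm, if_pos hEm]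
      obtain ⟨n₀, L, hn, hL, ht⟩ := classFull p q hq J hJodd hJne a₀ b₀ d₀ N
        (Even (q * ((r : ℤ) + 1) + 1)) hdeg2 h4aq₀ r hparity
      refine ⟨n₀, L, hn, ?_, ht⟩
      rcases hL with h | h
      · rw [hTset]; left; exact h
      · rw [hTset]; right; right; exact h
    · have hdeg2 : ∀ m : ℤ, N ≤ m → (Even m ↔ Even (q * ((r : ℤ) + 1) + 1)) →
          (degP (J m) : ℚ) = 4 * (a₁ * (m : ℚ) ^ 2 + b₁ * (m : ℚ) + d₁) := by
        intro m hm hpm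
        have hEm : ¬Even m := fun h => hEv (hpm.mp h)
        rw [hdeg m hm, if_neg hEm, if_neg hEm, if_neg hEm]
      obtain ⟨n₀, L, hn, hL, ht⟩ := classFull p q hq J hJodd hJne a₁ b₁ d₁ N
        (Even (q * ((r : ℤ) + 1) + 1)) hdeg2 h4aq₁ r hparity
      refine ⟨n₀, L, hn, ?_, ht⟩
      rcases hL with h | h
      · rw [hTset]; right; left; exact h
      · rw [hTset]; right; right; exact h
  obtain ⟨n₀, L₀, hn₀, hL₀, ht₀⟩ := classAny 0
  obtain ⟨n₁, L₁, hn₁, hL₁, ht₁⟩ := classAny 1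
  obtain ⟨M₀, rfl⟩ : ∃ M, n₀ = 2 * M := ⟨n₀ / 2, by omega⟩
  obtain ⟨M₁, rfl⟩ : ∃ M, n₁ = 2 * M + 1 := ⟨n₁ / 2, by omega⟩
  have he : Tendsto (fun k : ℕ => s (2 * k)) atTop (𝓝 L₀) := by
    rw [← tendsto_add_atTop_iff_nat M₀]
    refine ht₀.congr fun k => ?_
    rw [show 2 * M₀ + 2 * k = 2 * (k + M₀) from by omega]
  have ho : Tendsto (fun k : ℕ => s (2 * k + 1)) atTop (𝓝 L₁) := by
    rw [← tendsto_add_atTop_iff_nat M₁]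
    refine ht₁.congr fun k => ?_
    rw [show 2 * M₁ + 1 + 2 * k = 2 * (k + M₁) + 1 from by omega]
  rcases cluster_parity he ho hx with rfl | rfl
  · exact hL₀
  · exact hL₁
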